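/- arXiv:1402.3194 — 2 statements merged into one kernel-verified Lean document; each statement's English description precedes it below -/
import Mathlib

section
/- Let g, γ, h₁, h₂ > 0, and let μ be a real root of Q(μ) = ((μ−u₁)²−g h₁)((μ−u₂)²−g h₂) − γ g² h₁ h₂ with (μ−u₁)² ≠ g h₁. Then the vector r := e₁ + ((μ−u₁)/h₁)e₃ − c_μ(e₂ + ((μ−u₂)/h₂)e₄), where c_μ := 1 − (μ−u₁)²/(g h₁), satisfies A_x(u)·r = μ·r, i.e., r is a right eigenvector of A_x(u) for eigenvalue μ. -/
open Matrix

namespace RightEigAux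
variable {α : Type*}
@[simp] lemma v5 (x : α) (u : Fin 5 → α) : vecCons x u 5 = u 4 := rfl
@[simp] lemma v4 (x : α) (u : Fin 4 → α) : vecCons x u 4 = u 3 := rfl
@[simp] lemma v3 (x : α) (u : Fin 3 → α) : vecCons x u 3 = u 2 := rfl
@[simp] lemma v2 (x : α) (u : Fin 2 → α) : vecCons x u 2 = u 1 := rfl
@[simp] lemma v1 (x : α) (u : Fin 1 → α) : vecCons x u 1 = u 0 := rfl
end RightEigAux

noncomputable def Ax (g γ h₁ h₂ u₁ u₂ : ℝ) : Matrix (Fin 6) (Fin 6) ℝ :=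
  !![u₁, 0, h₁, 0, 0, 0;
     0, u₂, 0, h₂, 0, 0;
     g, g, u₁, 0, 0, 0;
     γ * g, g, 0, u₂, 0, 0;
     0, 0, 0, 0, u₁, 0;
     0, 0, 0, 0, 0, u₂]

theorem right_eigenvector (g γ h₁ h₂ u₁ u₂ : ℝ)
    (hg : 0 < g) (hγ : 0 < γ) (hh₁ : 0 < h₁) (hh₂ : 0 < h₂) (μ : ℝ)
    (hQ : ((μ - u₁)^2 - g * h₁) * ((μ - u₂)^2 - g * h₂) - γ * g^2 * h₁ * h₂ = 0)
    (hne : (μ - u₁)^2 ≠ g * h₁) :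
    (Ax g γ h₁ h₂ u₁ u₂).mulVec
        (![1, -(1 - (μ - u₁)^2 / (g * h₁)), (μ - u₁) / h₁,
           -(1 - (μ - u₁)^2 / (g * h₁)) * ((μ - u₂) / h₂), 0, 0]) =
      μ • (![1, -(1 - (μ - u₁)^2 / (g * h₁)), (μ - u₁) / h₁,
           -(1 - (μ - u₁)^2 / (g * h₁)) * ((μ - u₂) / h₂), 0, 0]) := by
  have hg' := hg.ne'
  have h1' := hh₁.ne'
  have h2' := hh₂.ne'
  funext i
  fin_cases i <;>
    simp [Ax, mulVec, dotProduct, Fin.sum_univ_six]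
  all_goals field_simp
  any_goals ring
  linear_combination (-1 : ℝ) * hQ
end

section
/- The characteristic polynomial of the 8×8 augmented-model matrix A^r_x(v) satisfies det(A^r_x(v) − μI₈) = μ²·det(A_x(u) − μI₆), where u consists of the first six components of v. -/
open Matrix

noncomputable def Arx (g γ f h₁ h₂ u₁ u₂ v₁ v₂ w₁ w₂ : ℝ) : Matrix (Fin 8) (Fin 8) ℝ :=
  !![u₁, 0, h₁, 0, 0, 0, 0, 0;
     0, u₂, 0, h₂, 0, 0, 0, 0;
     g, g, u₁, 0, v₁, 0, 0, 0;
     γ * g, g, 0, u₂, 0, v₂, 0, 0;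
     0, 0, 0, 0, 0, 0, 0, 0;
     0, 0, 0, 0, 0, 0, 0, 0;
     0, 0, w₁ + f, 0, 0, 0, u₁, 0;
     0, 0, 0, w₂ + f, 0, 0, 0, u₂]

lemma cons_val_five {α : Type*} {m : ℕ} (x : α) (u : Fin (m+5) → α) :
    Matrix.vecCons x u 5 =
      Matrix.vecHead (Matrix.vecTail (Matrix.vecTail (Matrix.vecTail (Matrix.vecTail u)))) := rfl

lemma cons_val_six {α : Type*} {m : ℕ} (x : α) (u : Fin (m+6) → α) :
    Matrix.vecCons x u 6 =
      Matrix.vecHead (Matrix.vecTail (Matrix.vecTail (Matrix.vecTail (Matrix.vecTail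
        (Matrix.vecTail u))))) := rfl

lemma cons_val_seven {α : Type*} {m : ℕ} (x : α) (u : Fin (m+7) → α) :
    Matrix.vecCons x u 7 =
      Matrix.vecHead (Matrix.vecTail (Matrix.vecTail (Matrix.vecTail (Matrix.vecTail
        (Matrix.vecTail (Matrix.vecTail u)))))) := rfl

/-- Permutation of `Fin 8` moving rows/columns 4 and 5 to the front. -/
def e8 : Fin 8 ≃ (Fin 2 ⊕ Fin 6) where
  toFun := ![Sum.inr 0, Sum.inr 1, Sum.inr 2, Sum.inr 3, Sum.inl 0, Sum.inl 1, Sum.inr 4, Sum.inr 5]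
  invFun := Sum.elim ![4, 5] ![0, 1, 2, 3, 6, 7]
  left_inv := by decide
  right_inv := by decide

set_option maxHeartbeats 2000000 in
set_option maxRecDepth 4000 in
lemma aux_block (g γ f h₁ h₂ u₁ u₂ v₁ v₂ w₁ w₂ μ : ℝ) :
    Arx g γ f h₁ h₂ u₁ u₂ v₁ v₂ w₁ w₂ - μ • (1 : Matrix (Fin 8) (Fin 8) ℝ) =
      (fromBlocks !![-μ, 0; 0, -μ] 0
        (!![0,0; 0,0; v₁,0; 0,v₂; 0,0; 0,0] : Matrix (Fin 6) (Fin 2) ℝ)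
        (!![u₁-μ, 0, h₁, 0, 0, 0;
            0, u₂-μ, 0, h₂, 0, 0;
            g, g, u₁-μ, 0, 0, 0;
            γ*g, g, 0, u₂-μ, 0, 0;
            0, 0, w₁+f, 0, u₁-μ, 0;
            0, 0, 0, w₂+f, 0, u₂-μ] : Matrix (Fin 6) (Fin 6) ℝ)).submatrix e8 e8 := by
  ext i j
  rw [show (e8 : Fin 8 → Fin 2 ⊕ Fin 6) = ![Sum.inr 0, Sum.inr 1, Sum.inr 2, Sum.inr 3, Sum.inl 0, Sum.inl 1,
      Sum.inr 4, Sum.inr 5] from rfl]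
  simp only [Arx, Matrix.sub_apply, Matrix.smul_apply, smul_eq_mul,
    Matrix.submatrix_apply, Equiv.coe_fn_mk, Matrix.fromBlocks]
  fin_cases i <;> fin_cases j <;>
    simp [Matrix.one_apply, cons_val_five, cons_val_six, cons_val_seven, Matrix.vecHead, Matrix.vecTail] <;> ring

set_option maxHeartbeats 2000000 in
set_option maxRecDepth 4000 in
lemma aux_det6 (g γ f h₁ h₂ u₁ u₂ w₁ w₂ μ : ℝ) :
    (!![u₁-μ, 0, h₁, 0, 0, 0;
       0, u₂-μ, 0, h₂, 0, 0;
       g, g, u₁-μ, 0, 0, 0;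
       γ*g, g, 0, u₂-μ, 0, 0;
       0, 0, w₁+f, 0, u₁-μ, 0;
       0, 0, 0, w₂+f, 0, u₂-μ] : Matrix (Fin 6) (Fin 6) ℝ).det =
    (!![u₁-μ, 0, h₁, 0, 0, 0;
       0, u₂-μ, 0, h₂, 0, 0;
       g, g, u₁-μ, 0, 0, 0;
       γ*g, g, 0, u₂-μ, 0, 0;
       0, 0, 0, 0, u₁-μ, 0;
       0, 0, 0, 0, 0, u₂-μ] : Matrix (Fin 6) (Fin 6) ℝ).det := by
  simp [Matrix.det_succ_row_zero, Fin.sum_univ_succ, Fin.succAbove]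

set_option maxHeartbeats 2000000 in
set_option maxRecDepth 4000 in
lemma aux_Ax (g γ h₁ h₂ u₁ u₂ μ : ℝ) :
    Ax g γ h₁ h₂ u₁ u₂ - μ • (1 : Matrix (Fin 6) (Fin 6) ℝ) =
    (!![u₁-μ, 0, h₁, 0, 0, 0;
       0, u₂-μ, 0, h₂, 0, 0;
       g, g, u₁-μ, 0, 0, 0;
       γ*g, g, 0, u₂-μ, 0, 0;
       0, 0, 0, 0, u₁-μ, 0;
       0, 0, 0, 0, 0, u₂-μ] : Matrix (Fin 6) (Fin 6) ℝ) := by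
  ext i j
  simp only [Ax, Matrix.sub_apply, Matrix.smul_apply, smul_eq_mul]
  fin_cases i <;> fin_cases j <;>
    simp [Matrix.one_apply, cons_val_five, cons_val_six, cons_val_seven, Matrix.vecHead, Matrix.vecTail] <;> ring

lemma det_fromBlocks_zero₁₂' {m n : Type} [Fintype m] [DecidableEq m] [Fintype n]
    [DecidableEq n] (A : Matrix m m ℝ) (C : Matrix n m ℝ) (D : Matrix n n ℝ) :
    (fromBlocks A 0 C D).det = A.det * D.det :=
  Matrix.det_fromBlocks_zero₁₂ A C D

theorem augmented_charpoly (g γ f h₁ h₂ u₁ u₂ v₁ v₂ w₁ w₂ μ : ℝ) :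
    (Arx g γ f h₁ h₂ u₁ u₂ v₁ v₂ w₁ w₂ - μ • (1 : Matrix (Fin 8) (Fin 8) ℝ)).det =
      μ^2 * (Ax g γ h₁ h₂ u₁ u₂ - μ • (1 : Matrix (Fin 6) (Fin 6) ℝ)).det := by
  rw [aux_block, Matrix.det_submatrix_equiv_self, det_fromBlocks_zero₁₂',
    Matrix.det_fin_two, aux_det6, aux_Ax]
  rw [show (!![-μ, 0; 0, -μ] : Matrix (Fin 2) (Fin 2) ℝ) 0 0 = -μ from rfl,
    show (!![-μ, 0; 0, -μ] : Matrix (Fin 2) (Fin 2) ℝ) 1 1 = -μ from rfl,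
    show (!![-μ, 0; 0, -μ] : Matrix (Fin 2) (Fin 2) ℝ) 0 1 = 0 from rfl,
    show (!![-μ, 0; 0, -μ] : Matrix (Fin 2) (Fin 2) ℝ) 1 0 = 0 from rfl]
  ring
end
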